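/- arXiv:1906.04083 — 4 statements merged into one kernel-verified Lean document; each statement's English description precedes it below -/
import Mathlib

section
/- Let H be a Hopf algebra, A a right H-comodule algebra, B = A^{co H}, and ℓ : H → A ⊗ A a strong connection form (normalised, splitting the counit via multiplication, right colinear and left colinear). Then for every h ∈ H, the element (id ⊗ μ_A ⊗ id)((ℓ ⊗ ℓ)(Δ_H(h))) lies in A ⊗ B ⊗ A, i.e., the middle leg is coinvariant. -/
open TensorProduct

section Aux

variable {H A : Type*} [Ring H] [Algebra ℂ H] [Ring A] [Algebra ℂ A]

/-- The six-slot multiplication map `(a ⊗ (b ⊗ k)) ⊗ (k' ⊗ (c ⊗ d)) ↦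
`a ⊗ (((b⊗k)*(c⊗k')) ⊗ d)`. -/
private noncomputable def M₂aux :
    (A ⊗[ℂ] (A ⊗[ℂ] H)) ⊗[ℂ] (H ⊗[ℂ] (A ⊗[ℂ] A)) →ₗ[ℂ] A ⊗[ℂ] ((A ⊗[ℂ] H) ⊗[ℂ] A) :=
  ((LinearMap.mul' ℂ (A ⊗[ℂ] H)).rTensor A).lTensor A ∘ₗ
  ((TensorProduct.assoc ℂ (A ⊗[ℂ] H) (A ⊗[ℂ] H) A).symm.toLinearMap).lTensor A ∘ₗ
  (TensorProduct.assoc ℂ A (A ⊗[ℂ] H) ((A ⊗[ℂ] H) ⊗[ℂ] A)).toLinearMap ∘ₗ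
  ((TensorProduct.comm ℂ H A).toLinearMap.rTensor A ∘ₗ
     (TensorProduct.assoc ℂ H A A).symm.toLinearMap).lTensor (A ⊗[ℂ] (A ⊗[ℂ] H))

private lemma M₂aux_tmul (a b c d : A) (k k' : H) :
    M₂aux ((a ⊗ₜ[ℂ] (b ⊗ₜ[ℂ] k)) ⊗ₜ[ℂ] (k' ⊗ₜ[ℂ] (c ⊗ₜ[ℂ] d))) =
      a ⊗ₜ[ℂ] (((b ⊗ₜ[ℂ] k) * (c ⊗ₜ[ℂ] k')) ⊗ₜ[ℂ] d) := by
  simp [M₂aux]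

private lemma assoc_rTensor_rTensor {R : Type*} [CommRing R] {M M' N P : Type*}
    [AddCommGroup M] [AddCommGroup M'] [AddCommGroup N] [AddCommGroup P]
    [Module R M] [Module R M'] [Module R N] [Module R P] (f : M →ₗ[R] M') :
    (TensorProduct.assoc R M' N P).toLinearMap ∘ₗ ((f.rTensor N).rTensor P)
      = f.rTensor (N ⊗[R] P) ∘ₗ (TensorProduct.assoc R M N P).toLinearMap := by
  ext m n p
  simp

private lemma lTensor_lTensor_assoc_symm {R : Type*} [CommRing R] {M N P Q : Type*}
    [AddCommGroup M] [AddCommGroup N] [AddCommGroup P] [AddCommGroup Q]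
    [Module R M] [Module R N] [Module R P] [Module R Q] (f : P →ₗ[R] Q) :
    f.lTensor (M ⊗[R] N) ∘ₗ (TensorProduct.assoc R M N P).symm.toLinearMap
      = (TensorProduct.assoc R M N Q).symm.toLinearMap ∘ₗ (f.lTensor N).lTensor M := by
  ext m n p
  simp

end Aux

set_option maxHeartbeats 1000000 in
set_option synthInstance.maxHeartbeats 400000 in
/-- For a strong connection form `ℓ` on a right `H`-comodule algebra `A`
(with coinvariants `B`), the middle leg of `(id ⊗ μ_A ⊗ id)((ℓ ⊗ ℓ)(Δ_H h))`
is coinvariant: the element lies in `A ⊗ B ⊗ A`. -/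
theorem stmt_3 (H A : Type*) [Ring H] [HopfAlgebra ℂ H] [Ring A] [Algebra ℂ A]
    (ρ : A →ₐ[ℂ] A ⊗[ℂ] H)
    (hcoassoc : ∀ a : A,
      TensorProduct.assoc ℂ A H H (TensorProduct.map ρ.toLinearMap LinearMap.id (ρ a)) =
        TensorProduct.map LinearMap.id Coalgebra.comul (ρ a))
    (hcounit : ∀ a : A,
      TensorProduct.rid ℂ A (TensorProduct.map LinearMap.id Coalgebra.counit (ρ a)) = a)
    -- inverse of the antipode and the induced left coaction λ_A
    (Sinv : H →ₗ[ℂ] H)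
    (hS1 : ∀ h : H, Sinv ((HopfAlgebra.antipode (R := ℂ) : H →ₗ[ℂ] H) h) = h)
    (hS2 : ∀ h : H, (HopfAlgebra.antipode (R := ℂ) : H →ₗ[ℂ] H) (Sinv h) = h)
    (lam : A →ₗ[ℂ] H ⊗[ℂ] A)
    (hlam : ∀ a : A,
      lam a = TensorProduct.map Sinv LinearMap.id (TensorProduct.comm ℂ A H (ρ a)))
    -- the strong connection form ℓ
    (ℓ : H →ₗ[ℂ] A ⊗[ℂ] A)
    (hnorm : ℓ 1 = (1 : A) ⊗ₜ[ℂ] (1 : A))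
    (hsplit : ∀ h : H, LinearMap.mul' ℂ A (ℓ h) = (Coalgebra.counit h : ℂ) • (1 : A))
    (hright : ∀ h : H,
      TensorProduct.map LinearMap.id ρ.toLinearMap (ℓ h) =
        TensorProduct.assoc ℂ A A H (TensorProduct.map ℓ LinearMap.id (Coalgebra.comul h)))
    (hleft : ∀ h : H,
      TensorProduct.assoc ℂ H A A (TensorProduct.map lam LinearMap.id (ℓ h)) =
        TensorProduct.map LinearMap.id ℓ (Coalgebra.comul h))
    -- the map (id ⊗ μ_A ⊗ id) : (A ⊗ A) ⊗ (A ⊗ A) → A ⊗ (A ⊗ A)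
    (f : (A ⊗[ℂ] A) ⊗[ℂ] (A ⊗[ℂ] A) →ₗ[ℂ] A ⊗[ℂ] (A ⊗[ℂ] A))
    (hf : ∀ a₁ a₂ a₃ a₄ : A,
      f ((a₁ ⊗ₜ[ℂ] a₂) ⊗ₜ[ℂ] (a₃ ⊗ₜ[ℂ] a₄)) = a₁ ⊗ₜ[ℂ] ((a₂ * a₃) ⊗ₜ[ℂ] a₄)) :
    ∀ h : H,
      f (TensorProduct.map ℓ ℓ (Coalgebra.comul h)) ∈
        LinearMap.range (TensorProduct.map (LinearMap.id : A →ₗ[ℂ] A)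
          (TensorProduct.map
            (LinearMap.ker (ρ.toLinearMap - (TensorProduct.mk ℂ A H).flip 1)).subtype
            (LinearMap.id : A →ₗ[ℂ] A))) := by
  intro h
  classical
  set g : A →ₗ[ℂ] A ⊗[ℂ] H := ρ.toLinearMap - (TensorProduct.mk ℂ A H).flip 1 with hg
  set S : H →ₗ[ℂ] H := (HopfAlgebra.antipode (R := ℂ) : H →ₗ[ℂ] H) with hS
  set Δ : H →ₗ[ℂ] H ⊗[ℂ] H := (Coalgebra.comul : H →ₗ[ℂ] H ⊗[ℂ] H) with hΔ
  -- Reduce to vanishing under `lTensor (rTensor g)` via flatness/exactness.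
  have hexact : Function.Exact ((LinearMap.ker g).subtype) g :=
    LinearMap.exact_subtype_ker_map g
  have hbig : Function.Exact
      (((LinearMap.ker g).subtype.rTensor A).lTensor A)
      ((g.rTensor A).lTensor A) :=
    Module.Flat.lTensor_exact A (Module.Flat.rTensor_exact A hexact)
  have hmapeq : TensorProduct.map (LinearMap.id : A →ₗ[ℂ] A)
      (TensorProduct.map (LinearMap.ker g).subtype (LinearMap.id : A →ₗ[ℂ] A))
      = ((LinearMap.ker g).subtype.rTensor A).lTensor A := rfl
  rw [hmapeq]
  rw [LinearMap.exact_iff] at hbig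
  rw [← hbig]
  show ((g.rTensor A).lTensor A) (f (TensorProduct.map ℓ ℓ (Δ h))) = 0
  -- pointwise multiplication lemma for M₂aux
  have Lmul : ∀ (a d : A) (u v : A ⊗[ℂ] H),
      M₂aux ((a ⊗ₜ[ℂ] u) ⊗ₜ[ℂ]
        ((TensorProduct.assoc ℂ H A A) ((TensorProduct.comm ℂ A H v) ⊗ₜ[ℂ] d))) =
        a ⊗ₜ[ℂ] ((u * v) ⊗ₜ[ℂ] d) := by
    intro a d u v
    induction v using TensorProduct.induction_on with
    | zero => simp
    | tmul c k' =>
      induction u using TensorProduct.induction_on with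
      | zero => simp
      | tmul b k => simp [M₂aux_tmul]
      | add u1 u2 h1 h2 => simp only [tmul_add, add_tmul, map_add, add_mul, h1, h2]
    | add v1 v2 h1 h2 => simp only [map_add, tmul_add, add_tmul, mul_add, h1, h2]
  set r1 : A ⊗[ℂ] A →ₗ[ℂ] A ⊗[ℂ] (A ⊗[ℂ] H) := ρ.toLinearMap.lTensor A with hr1
  set r2 : A ⊗[ℂ] A →ₗ[ℂ] H ⊗[ℂ] (A ⊗[ℂ] A) :=
    (TensorProduct.assoc ℂ H A A).toLinearMap ∘ₗ
      ((TensorProduct.comm ℂ A H).toLinearMap ∘ₗ ρ.toLinearMap).rTensor A with hr2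
  have hC1 : (ρ.toLinearMap.rTensor A).lTensor A ∘ₗ f = M₂aux ∘ₗ TensorProduct.map r1 r2 := by
    apply TensorProduct.ext_fourfold'
    intro a b c d
    have lhs : ((ρ.toLinearMap.rTensor A).lTensor A ∘ₗ f)
        ((a ⊗ₜ[ℂ] b) ⊗ₜ[ℂ] (c ⊗ₜ[ℂ] d)) = a ⊗ₜ[ℂ] (((ρ b) * (ρ c)) ⊗ₜ[ℂ] d) := by
      simp [hf, map_mul]
    rw [lhs]
    simp only [LinearMap.comp_apply, TensorProduct.map_tmul, hr1, hr2,
      LinearMap.lTensor_tmul, LinearMap.rTensor_tmul, AlgHom.toLinearMap_apply,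
      LinearEquiv.coe_coe]
    exact (Lmul a d (ρ b) (ρ c)).symm
  have hC2 : r2 ∘ₗ ℓ = TensorProduct.map S ℓ ∘ₗ Δ := by
    have h1 : lam = Sinv.rTensor A ∘ₗ
        ((TensorProduct.comm ℂ A H).toLinearMap ∘ₗ ρ.toLinearMap) := by
      apply LinearMap.ext; intro a
      rw [hlam a]; rfl
    have h3 : S ∘ₗ Sinv = LinearMap.id := LinearMap.ext hS2
    apply LinearMap.ext; intro q
    have h2 : (Sinv.rTensor (A ⊗[ℂ] A)) (r2 (ℓ q)) =
        TensorProduct.map LinearMap.id ℓ (Δ q) := by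
      have hle := hleft q
      rw [show TensorProduct.map lam LinearMap.id = lam.rTensor A from rfl, h1,
        LinearMap.rTensor_comp] at hle
      rw [← hle]
      have := LinearMap.congr_fun
        (assoc_rTensor_rTensor (R := ℂ) (N := A) (P := A) Sinv)
        ((((TensorProduct.comm ℂ A H).toLinearMap ∘ₗ ρ.toLinearMap).rTensor A) (ℓ q))
      simp only [LinearMap.comp_apply, LinearEquiv.coe_coe] at this ⊢
      rw [this]
      simp [hr2]
    have h4 : ∀ z : H ⊗[ℂ] (A ⊗[ℂ] A),
        (S.rTensor (A ⊗[ℂ] A)) ((Sinv.rTensor (A ⊗[ℂ] A)) z) = z := by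
      intro z
      have h5 : S.rTensor (A ⊗[ℂ] A) ∘ₗ Sinv.rTensor (A ⊗[ℂ] A) = LinearMap.id := by
        rw [← LinearMap.rTensor_comp, h3, LinearMap.rTensor_id]
      simpa using LinearMap.congr_fun h5 z
    calc r2 (ℓ q) = (S.rTensor (A ⊗[ℂ] A)) ((Sinv.rTensor (A ⊗[ℂ] A)) (r2 (ℓ q))) :=
          (h4 _).symm
      _ = (S.rTensor (A ⊗[ℂ] A)) (TensorProduct.map LinearMap.id ℓ (Δ q)) := by rw [h2]
      _ = (TensorProduct.map S ℓ ∘ₗ Δ) q := by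
          rw [← LinearMap.comp_apply (S.rTensor (A ⊗[ℂ] A)),
            show S.rTensor (A ⊗[ℂ] A) = TensorProduct.map S LinearMap.id from rfl,
            ← TensorProduct.map_comp]
          simp
  -- key1 : left colinearity + right colinearity combined
  set Nmap : (H ⊗[ℂ] H) ⊗[ℂ] (H ⊗[ℂ] H) →ₗ[ℂ] A ⊗[ℂ] ((A ⊗[ℂ] H) ⊗[ℂ] A) :=
    M₂aux ∘ₗ TensorProduct.map
      ((TensorProduct.assoc ℂ A A H).toLinearMap ∘ₗ ℓ.rTensor H)
      (TensorProduct.map S ℓ) with hN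
  have hr : r1 ∘ₗ ℓ =
      ((TensorProduct.assoc ℂ A A H).toLinearMap ∘ₗ ℓ.rTensor H) ∘ₗ Δ :=
    LinearMap.ext fun k => hright k
  have key1 : (ρ.toLinearMap.rTensor A).lTensor A ∘ₗ (f ∘ₗ TensorProduct.map ℓ ℓ)
      = Nmap ∘ₗ TensorProduct.map Δ Δ := by
    rw [← LinearMap.comp_assoc, hC1, LinearMap.comp_assoc, ← TensorProduct.map_comp,
      hr, hC2, TensorProduct.map_comp, hN, LinearMap.comp_assoc]
  -- the regrouping map θ
  set θ : (H ⊗[ℂ] ((H ⊗[ℂ] H) ⊗[ℂ] H)) →ₗ[ℂ] (H ⊗[ℂ] H) ⊗[ℂ] (H ⊗[ℂ] H) :=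
    (TensorProduct.assoc ℂ H H (H ⊗[ℂ] H)).symm.toLinearMap ∘ₗ
      (TensorProduct.assoc ℂ H H H).toLinearMap.lTensor H with hθ
  set u : H ⊗[ℂ] (H ⊗[ℂ] H) := Δ.lTensor H (Δ h) with hu
  have E2 : TensorProduct.map Δ Δ (Δ h) = θ ((Δ.rTensor H).lTensor H u) := by
    have c1 : Δ.rTensor H ∘ₗ Δ =
        (TensorProduct.assoc ℂ H H H).symm.toLinearMap ∘ₗ Δ.lTensor H ∘ₗ Δ := by
      rw [hΔ]; exact Coalgebra.coassoc_symm.symm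
    have e1 : (Δ.rTensor H).lTensor H u =
        ((TensorProduct.assoc ℂ H H H).symm.toLinearMap.lTensor H)
          (((Δ.lTensor H).lTensor H) u) := by
      calc (Δ.rTensor H).lTensor H u = ((Δ.rTensor H ∘ₗ Δ).lTensor H) (Δ h) := by
            rw [LinearMap.lTensor_comp, hu]; rfl
        _ = _ := by
            rw [c1, LinearMap.lTensor_comp, LinearMap.lTensor_comp, hu]; rfl
    have c2 : θ ∘ₗ (TensorProduct.assoc ℂ H H H).symm.toLinearMap.lTensor H
        = (TensorProduct.assoc ℂ H H (H ⊗[ℂ] H)).symm.toLinearMap := by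
      rw [hθ, LinearMap.comp_assoc, ← LinearMap.lTensor_comp]
      have : (TensorProduct.assoc ℂ H H H).toLinearMap ∘ₗ
          (TensorProduct.assoc ℂ H H H).symm.toLinearMap = LinearMap.id :=
        LinearMap.ext fun x => by simp
      rw [this, LinearMap.lTensor_id, LinearMap.comp_id]
    have e2 : θ ((Δ.rTensor H).lTensor H u) =
        (TensorProduct.assoc ℂ H H (H ⊗[ℂ] H)).symm (((Δ.lTensor H).lTensor H) u) := by
      rw [e1, ← LinearMap.comp_apply, c2]; rfl
    rw [e2]
    -- now compute the LHS
    have e3 : TensorProduct.map Δ Δ (Δ h) = (Δ.lTensor (H ⊗[ℂ] H)) ((Δ.rTensor H) (Δ h)) := by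
      exact (LinearMap.congr_fun (LinearMap.lTensor_comp_rTensor (f := Δ) (g := Δ)) (Δ h)).symm
    have e4 : (Δ.rTensor H) (Δ h) = (TensorProduct.assoc ℂ H H H).symm u := by
      rw [hu, hΔ]; exact (Coalgebra.coassoc_symm_apply h).symm
    rw [e3, e4]
    have := LinearMap.congr_fun
      (lTensor_lTensor_assoc_symm (R := ℂ) (M := H) (N := H) (P := H) Δ) u
    simpa using this
  -- the antipode collapse
  set μH : H ⊗[ℂ] H →ₗ[ℂ] H := LinearMap.mul' ℂ H with hμH
  set Qmap : (H ⊗[ℂ] (H ⊗[ℂ] H)) →ₗ[ℂ] A ⊗[ℂ] ((A ⊗[ℂ] H) ⊗[ℂ] A) :=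
    M₂aux ∘ₗ (TensorProduct.map
      ((TensorProduct.assoc ℂ A A H).toLinearMap ∘ₗ ℓ.rTensor H)
      ((TensorProduct.mk ℂ H (A ⊗[ℂ] A)) 1 ∘ₗ ℓ)) ∘ₗ
      (TensorProduct.assoc ℂ H H H).symm.toLinearMap with hQ
  have LM : ∀ (x y : A ⊗[ℂ] A) (w w' : H),
      M₂aux (((TensorProduct.assoc ℂ A A H) (x ⊗ₜ[ℂ] w)) ⊗ₜ[ℂ] (w' ⊗ₜ[ℂ] y)) =
        M₂aux (((TensorProduct.assoc ℂ A A H) (x ⊗ₜ[ℂ] (w * w'))) ⊗ₜ[ℂ]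
          ((1 : H) ⊗ₜ[ℂ] y)) := by
    intro x y w w'
    induction x using TensorProduct.induction_on with
    | zero => simp
    | tmul a b =>
      induction y using TensorProduct.induction_on with
      | zero => simp
      | tmul c d => simp [M₂aux_tmul, Algebra.TensorProduct.tmul_mul_tmul, mul_one]
      | add y1 y2 h1 h2 => simp only [tmul_add, map_add, h1, h2]
    | add x1 x2 h1 h2 => simp only [add_tmul, map_add, h1, h2]
  have hC4 : Nmap ∘ₗ θ = Qmap ∘ₗ ((μH ∘ₗ S.lTensor H).rTensor H).lTensor H := by
    ext p w w' q
    simp only [hN, hθ, hQ, LinearMap.comp_apply, LinearMap.lTensor_tmul,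
      LinearMap.rTensor_tmul, TensorProduct.map_tmul, LinearEquiv.coe_coe,
      TensorProduct.assoc_tmul, TensorProduct.assoc_symm_tmul,
      TensorProduct.mk_apply, LinearMap.mul'_apply,
      TensorProduct.AlgebraTensorModule.curry_apply, TensorProduct.curry_apply,
      LinearMap.coe_restrictScalars]
    exact LM (ℓ p) (ℓ q) w (S w')
  -- counit collapse
  have hC5 : ((Algebra.linearMap ℂ H ∘ₗ (Coalgebra.counit : H →ₗ[ℂ] ℂ)).rTensor H) ∘ₗ Δ
      = (TensorProduct.mk ℂ H H) 1 := by
    apply LinearMap.ext; intro k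
    rw [LinearMap.comp_apply, LinearMap.rTensor_comp, LinearMap.comp_apply, hΔ,
      Coalgebra.rTensor_counit_comul]
    simp
  -- the antipode axiom
  have hanti : μH ∘ₗ S.lTensor H ∘ₗ Δ = Algebra.linearMap ℂ H ∘ₗ Coalgebra.counit := by
    rw [hμH, hS, hΔ]; exact HopfAlgebra.mul_antipode_lTensor_comul
  -- bottom row
  have LQ : ∀ (x y : A ⊗[ℂ] A),
      M₂aux (((TensorProduct.assoc ℂ A A H) (x ⊗ₜ[ℂ] (1 : H))) ⊗ₜ[ℂ] ((1 : H) ⊗ₜ[ℂ] y)) =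
        ((((TensorProduct.mk ℂ A H).flip 1).rTensor A).lTensor A) (f (x ⊗ₜ[ℂ] y)) := by
    intro x y
    induction x using TensorProduct.induction_on with
    | zero => simp
    | tmul a b =>
      induction y using TensorProduct.induction_on with
      | zero => simp
      | tmul c d => simp [M₂aux_tmul, hf, Algebra.TensorProduct.tmul_mul_tmul]
      | add y1 y2 h1 h2 => simp only [tmul_add, map_add, h1, h2]
    | add x1 x2 h1 h2 => simp only [add_tmul, map_add, h1, h2]
  have hC6 : Qmap ∘ₗ ((TensorProduct.mk ℂ H H) 1).lTensor H =
      (((TensorProduct.mk ℂ A H).flip 1).rTensor A).lTensor A ∘ₗ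
        (f ∘ₗ TensorProduct.map ℓ ℓ) := by
    ext p q
    simp only [hQ, LinearMap.comp_apply, LinearMap.lTensor_tmul, TensorProduct.mk_apply,
      TensorProduct.assoc_symm_tmul, TensorProduct.map_tmul, LinearEquiv.coe_coe,
      LinearMap.rTensor_tmul, TensorProduct.AlgebraTensorModule.curry_apply,
      TensorProduct.curry_apply, LinearMap.coe_restrictScalars]
    exact LQ (ℓ p) (ℓ q)
  -- assemble everything
  have hfold : (((μH ∘ₗ S.lTensor H).rTensor H).lTensor H) ((Δ.rTensor H).lTensor H u)
      = (((Algebra.linearMap ℂ H ∘ₗ (Coalgebra.counit : H →ₗ[ℂ] ℂ)).rTensor H).lTensor H)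
          u := by
    rw [← LinearMap.comp_apply, ← LinearMap.lTensor_comp, ← LinearMap.rTensor_comp,
      LinearMap.comp_assoc, hanti]
  have hC5' : (((Algebra.linearMap ℂ H ∘ₗ (Coalgebra.counit : H →ₗ[ℂ] ℂ)).rTensor H).lTensor H)
        u = (((TensorProduct.mk ℂ H H) 1).lTensor H) (Δ h) := by
    rw [hu, ← LinearMap.comp_apply, ← LinearMap.lTensor_comp, hC5]
  have main : (ρ.toLinearMap.rTensor A).lTensor A (f (TensorProduct.map ℓ ℓ (Δ h)))
      = (((TensorProduct.mk ℂ A H).flip 1).rTensor A).lTensor A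
          (f (TensorProduct.map ℓ ℓ (Δ h))) := by
    calc (ρ.toLinearMap.rTensor A).lTensor A (f (TensorProduct.map ℓ ℓ (Δ h)))
        = Nmap (TensorProduct.map Δ Δ (Δ h)) := LinearMap.congr_fun key1 (Δ h)
      _ = Nmap (θ ((Δ.rTensor H).lTensor H u)) := by rw [E2]
      _ = Qmap ((((μH ∘ₗ S.lTensor H).rTensor H).lTensor H)
            ((Δ.rTensor H).lTensor H u)) := LinearMap.congr_fun hC4 _
      _ = Qmap ((((TensorProduct.mk ℂ H H) 1).lTensor H) (Δ h)) := by rw [hfold, hC5']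
      _ = _ := LinearMap.congr_fun hC6 (Δ h)
  have hsubel : ∀ x : A ⊗[ℂ] (A ⊗[ℂ] A), (g.rTensor A).lTensor A x =
      (ρ.toLinearMap.rTensor A).lTensor A x -
        (((TensorProduct.mk ℂ A H).flip 1).rTensor A).lTensor A x := by
    intro x
    induction x using TensorProduct.induction_on with
    | zero => simp
    | tmul a y =>
      induction y using TensorProduct.induction_on with
      | zero => simp
      | tmul b c =>
        simp only [LinearMap.lTensor_tmul, LinearMap.rTensor_tmul, hg,
          LinearMap.sub_apply, sub_tmul, tmul_sub]
      | add y1 y2 h1 h2 =>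
        simp only [tmul_add, map_add, h1, h2]; abel
    | add x1 x2 h1 h2 =>
      simp only [map_add, h1, h2]; abel
  rw [hsubel, sub_eq_zero]
  exact main
end

section
/- Let O(U_q(2)) be as above and let v be the matrix with rows (u,0,0), (0, α, −qγ*u*), (0, γ, α*u*). Then the entries v_{ij} satisfy the quantum matrix relations: v_{ij}v_{ik} = q v_{ik}v_{ij} for j < k; v_{ji}v_{ki} = q v_{ki}v_{ji} for j < k; v_{ij}v_{km} = v_{km}v_{ij} for i < k, j > m; and v_{ij}v_{km} − v_{km}v_{ij} = (q − q⁻¹) v_{im}v_{kj} for i < k, j < m, where indices run over {1,2,3}. -/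
set_option maxHeartbeats 2000000 in
/-- The entries of the fundamental matrix `v` of `O(U_q(2))` satisfy the quantum matrix
(`q`-commutation) relations. -/
theorem stmt_6 (A : Type*) [Ring A] [Algebra ℂ A] [StarRing A] [StarModule ℂ A]
    (q : ℝ) (hq0 : 0 < q) (hq1 : q < 1) (u α γ : A)
    (huu : u * star u = 1) (huu' : star u * u = 1)
    (hcent : ∀ x : A, u * x = x * u)
    (h1 : α * γ = (q : ℂ) • (γ * α))
    (h2 : α * star γ = (q : ℂ) • (star γ * α))
    (h3 : γ * star γ = star γ * γ)
    (h4 : star α * α + γ * star γ = 1)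
    (h5 : α * star α + ((q : ℂ) ^ 2) • (γ * star γ) = 1)
    (v : Matrix (Fin 3) (Fin 3) A)
    (hv : v = !![u, 0, 0;
                 0, α, -((q : ℂ) • (star γ * star u));
                 0, γ, star α * star u]) :
    (∀ i j k : Fin 3, j < k → v i j * v i k = (q : ℂ) • (v i k * v i j)) ∧
    (∀ i j k : Fin 3, j < k → v j i * v k i = (q : ℂ) • (v k i * v j i)) ∧
    (∀ i j k m : Fin 3, i < k → m < j → v i j * v k m = v k m * v i j) ∧
    (∀ i j k m : Fin 3, i < k → j < m →
      v i j * v k m - v k m * v i j = ((q : ℂ) - (q : ℂ)⁻¹) • (v i m * v k j)) := by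
  subst hv
  have hq : (q : ℂ) ≠ 0 := by exact_mod_cast hq0.ne'
  have hsu : ∀ x : A, star u * x = x * star u := by
    intro x
    have := congrArg star (hcent (star x))
    simpa [star_mul] using this.symm
  have hstar1 : star γ * star α = (q : ℂ) • (star α * star γ) := by
    have := congrArg star h1
    simpa [star_mul, star_smul, Complex.star_def, Complex.conj_ofReal] using this
  have hstar2 : γ * star α = (q : ℂ) • (star α * γ) := by
    have := congrArg star h2
    simpa [star_mul, star_smul, Complex.star_def, Complex.conj_ofReal] using this
  have e4 : α * star α - star α * α = ((1 : ℂ) - (q : ℂ) ^ 2) • (γ * star γ) := by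
    calc α * star α - star α * α
        = (1 - (q : ℂ) ^ 2 • (γ * star γ)) - (1 - γ * star γ) := by
          rw [eq_sub_of_add_eq h5, eq_sub_of_add_eq h4]
      _ = (1 : ℂ) • (γ * star γ) - (q : ℂ) ^ 2 • (γ * star γ) := by rw [one_smul]; abel
      _ = ((1 : ℂ) - (q : ℂ) ^ 2) • (γ * star γ) := by rw [sub_smul]
  refine ⟨?_, ?_, ?_, ?_⟩
  · intro i j k hjk
    fin_cases i <;> fin_cases j <;> fin_cases k <;>
      first
      | exact absurd hjk (by decide)
      | (simp [Matrix.vecHead, Matrix.vecTail]) <;>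
        first
        | -- q • (α * (star γ * star u)) = q • q • (star γ * star u * α)
          (rw [← mul_assoc, h2, smul_mul_assoc, mul_assoc, ← hsu α, ← mul_assoc]; simp [Complex.coe_smul])
        | -- γ * (star α * star u) = q • (star α * star u * γ)
          (rw [← mul_assoc, hstar2, smul_mul_assoc, mul_assoc, ← hsu γ, ← mul_assoc]; simp [Complex.coe_smul])
  · intro i j k hjk
    fin_cases i <;> fin_cases j <;> fin_cases k <;>
      first
      | exact absurd hjk (by decide)
      | (simp [Matrix.vecHead, Matrix.vecTail]) <;>
        first
        | exact h1
        | -- q • (star γ * star u * (star α * star u)) =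
          --   q • q • (star α * star u * (star γ * star u))
          rw [mul_assoc (star γ), ← mul_assoc (star u), hsu (star α),
            mul_assoc (star α), ← mul_assoc (star γ), hstar1,
            mul_assoc (star α), ← mul_assoc (star u), hsu (star γ),
            mul_assoc (star γ), ← mul_assoc (star α), smul_mul_assoc]
          simp [Complex.coe_smul]
  · intro i j k m hik hmj
    fin_cases i <;> fin_cases j <;> fin_cases k <;> fin_cases m <;>
      first
      | exact absurd hik (by decide)
      | exact absurd hmj (by decide)
      | (simp [Matrix.vecHead, Matrix.vecTail]) <;>
        -- q • (star γ * star u * γ) = q • (γ * (star γ * star u))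
        rw [mul_assoc, hsu γ, ← mul_assoc, ← h3, mul_assoc]
  · intro i j k m hik hjm
    fin_cases i <;> fin_cases j <;> fin_cases k <;> fin_cases m <;>
      first
      | exact absurd hik (by decide)
      | exact absurd hjm (by decide)
      | (simp [Matrix.vecHead, Matrix.vecTail]) <;>
        first
        | rw [hcent, sub_self]
        | rw [hcent (star γ * star u), neg_add_cancel]
        | -- α * (star α * star u) - star α * star u * α
          --   = -((q - q⁻¹) • q • (star γ * star u * γ))
          (rw [show star γ * star u * γ = (γ * star γ) * star u by
                rw [mul_assoc, hsu γ, ← mul_assoc, ← h3],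
              ← mul_assoc α, show star α * star u * α = (star α * α) * star u by
                rw [mul_assoc, hsu α, ← mul_assoc],
              ← sub_mul, e4, smul_mul_assoc]
           simp only [← Complex.coe_smul]
           rw [smul_smul, ← neg_smul]
           congr 1
           field_simp
           ring)
end

section
/- Let H be a Hopf algebra, A a right H-comodule algebra with coaction ϱ_A, B = A^{co H}, V a left H-comodule, and ℓ : H → A ⊗ A a strong connection form. Then the map σ : A □_H V → B ⊗ (A □_H V), σ(Σᵢ aⁱ ⊗ vⁱ) = Σᵢ aⁱ₍₀₎ ℓ(aⁱ₍₁₎)¹ ⊗ ℓ(aⁱ₍₁₎)² ⊗ vⁱ (where ℓ(h) = ℓ(h)¹ ⊗ ℓ(h)², summation implicit), is a well-defined left B-linear splitting of the multiplication map B ⊗ (A □_H V) → A □_H V; that is, multiplying the first two legs of σ(x) recovers x, for all x ∈ A □_H V. -/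
open TensorProduct

set_option maxHeartbeats 2000000 in
set_option synthInstance.maxHeartbeats 400000 in
/-- A strong connection form `ℓ` on a principal `H`-comodule algebra `A` induces, for any left
`H`-comodule `V`, a left `B`-linear splitting `σ` of the multiplication map
`B ⊗ (A □_H V) → A □_H V`, where `B = A^{co H}`:
`σ` takes values in `B ⊗ (A □_H V)`, multiplying its first two legs recovers the identity,
and `σ` commutes with left multiplication by coinvariants. -/
theorem stmt_13 (H A V : Type*) [Ring H] [HopfAlgebra ℂ H] [Ring A] [Algebra ℂ A]
    [AddCommGroup V] [Module ℂ V]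
    (ρ : A →ₐ[ℂ] A ⊗[ℂ] H)
    (hcoassoc : ∀ a : A,
      TensorProduct.assoc ℂ A H H (TensorProduct.map ρ.toLinearMap LinearMap.id (ρ a)) =
        TensorProduct.map LinearMap.id Coalgebra.comul (ρ a))
    (hcounit : ∀ a : A,
      TensorProduct.rid ℂ A (TensorProduct.map LinearMap.id Coalgebra.counit (ρ a)) = a)
    -- inverse of the antipode and induced left coaction on A
    (Sinv : H →ₗ[ℂ] H)
    (hS1 : ∀ h : H, Sinv ((HopfAlgebra.antipode (R := ℂ) : H →ₗ[ℂ] H) h) = h)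
    (hS2 : ∀ h : H, (HopfAlgebra.antipode (R := ℂ) : H →ₗ[ℂ] H) (Sinv h) = h)
    (lam : A →ₗ[ℂ] H ⊗[ℂ] A)
    (hlam : ∀ a : A,
      lam a = TensorProduct.map Sinv LinearMap.id (TensorProduct.comm ℂ A H (ρ a)))
    -- the strong connection form
    (ℓ : H →ₗ[ℂ] A ⊗[ℂ] A)
    (hnorm : ℓ 1 = (1 : A) ⊗ₜ[ℂ] (1 : A))
    (hsplit : ∀ h : H, LinearMap.mul' ℂ A (ℓ h) = (Coalgebra.counit h : ℂ) • (1 : A))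
    (hright : ∀ h : H,
      TensorProduct.map LinearMap.id ρ.toLinearMap (ℓ h) =
        TensorProduct.assoc ℂ A A H (TensorProduct.map ℓ LinearMap.id (Coalgebra.comul h)))
    (hleft : ∀ h : H,
      TensorProduct.assoc ℂ H A A (TensorProduct.map lam LinearMap.id (ℓ h)) =
        TensorProduct.map LinearMap.id ℓ (Coalgebra.comul h))
    -- the left H-comodule V
    (lamV : V →ₗ[ℂ] H ⊗[ℂ] V)
    (hVcoassoc : ∀ v : V,
      TensorProduct.assoc ℂ H H V (TensorProduct.map Coalgebra.comul LinearMap.id (lamV v)) =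
        TensorProduct.map LinearMap.id lamV (lamV v))
    (hVcounit : ∀ v : V,
      TensorProduct.lid ℂ V (TensorProduct.map Coalgebra.counit LinearMap.id (lamV v)) = v)
    -- the coinvariant subalgebra B and the cotensor product C = A □_H V
    (B : Submodule ℂ A)
    (hB : B = LinearMap.ker (ρ.toLinearMap - (TensorProduct.mk ℂ A H).flip 1))
    (C : Submodule ℂ (A ⊗[ℂ] V))
    (hC : C = LinearMap.ker
      ((TensorProduct.assoc ℂ A H V).toLinearMap ∘ₗ
          TensorProduct.map ρ.toLinearMap LinearMap.id -
        TensorProduct.map LinearMap.id lamV))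
    -- the map σ : x ↦ Σ x⁰₍₀₎ ℓ(x⁰₍₁₎)¹ ⊗ ℓ(x⁰₍₁₎)² ⊗ x¹
    (σ : A ⊗[ℂ] V →ₗ[ℂ] A ⊗[ℂ] (A ⊗[ℂ] V))
    (hσ : σ = (TensorProduct.assoc ℂ A A V).toLinearMap ∘ₗ
      TensorProduct.map
        ((TensorProduct.map (LinearMap.mul' ℂ A) LinearMap.id) ∘ₗ
          (TensorProduct.assoc ℂ A A A).symm.toLinearMap ∘ₗ
          TensorProduct.map LinearMap.id ℓ)
        LinearMap.id ∘ₗ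
      TensorProduct.map ρ.toLinearMap LinearMap.id)
    -- the multiplication B ⊗ (A □_H V) → A □_H V, computed in A ⊗ (A ⊗ V)
    (Ψ : A ⊗[ℂ] (A ⊗[ℂ] V) →ₗ[ℂ] A ⊗[ℂ] V)
    (hΨ : Ψ = TensorProduct.map (LinearMap.mul' ℂ A) LinearMap.id ∘ₗ
      (TensorProduct.assoc ℂ A A V).symm.toLinearMap) :
    ∀ x ∈ C,
      (σ x ∈ LinearMap.range (TensorProduct.map B.subtype C.subtype)) ∧
      Ψ (σ x) = x ∧
      (∀ b ∈ B,
        σ (TensorProduct.map (LinearMap.mulLeft ℂ b) LinearMap.id x) =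
          TensorProduct.map (LinearMap.mulLeft ℂ b) LinearMap.id (σ x)) := by
  intro x hx
  -- notation
  set ρ' : A →ₗ[ℂ] A ⊗[ℂ] H := ρ.toLinearMap with hρ'
  -- the "first-leg" map: r ↦ (m ⊗ id)(id ⊗ ℓ)(r), so that σ₀ = F ∘ ρ'
  set F : A ⊗[ℂ] H →ₗ[ℂ] A ⊗[ℂ] A :=
    (TensorProduct.map (LinearMap.mul' ℂ A) LinearMap.id) ∘ₗ
      (TensorProduct.assoc ℂ A A A).symm.toLinearMap ∘ₗ
      TensorProduct.map LinearMap.id ℓ with hF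
  have mulF : ∀ (c : A) (t : A ⊗[ℂ] A),
      LinearMap.mul' ℂ A (TensorProduct.map (LinearMap.mul' ℂ A) LinearMap.id
        ((TensorProduct.assoc ℂ A A A).symm (c ⊗ₜ[ℂ] t))) = c * LinearMap.mul' ℂ A t := by
    intro c t
    induction t using TensorProduct.induction_on with
    | zero => rw [tmul_zero]; simp
    | tmul p q => simp [mul_assoc]
    | add s t hs ht => simp only [tmul_add, map_add, hs, ht, mul_add]
  have mulσ₀ : ∀ a : A, LinearMap.mul' ℂ A (F (ρ' a)) = a := by
    intro a
    have key : ∀ r : A ⊗[ℂ] H, LinearMap.mul' ℂ A (F r) =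
        TensorProduct.rid ℂ A (TensorProduct.map LinearMap.id Coalgebra.counit r) := by
      intro r
      induction r using TensorProduct.induction_on with
      | zero => simp
      | tmul c h =>
        simp only [hF, LinearMap.comp_apply, TensorProduct.map_tmul, LinearMap.id_apply,
          LinearEquiv.coe_toLinearMap, mulF, hsplit, TensorProduct.rid_tmul]
        simp [mul_smul_comm]
      | add s t hs ht => simp only [map_add, hs, ht]
    rw [key]
    have := hcounit a
    simpa [hρ'] using this
  -- σ on pure tensors
  have σtmul : ∀ (a : A) (v : V),
      σ (a ⊗ₜ[ℂ] v) = (TensorProduct.assoc ℂ A A V) ((F (ρ' a)) ⊗ₜ[ℂ] v) := by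
    intro a v
    rw [hσ]
    simp only [LinearMap.comp_apply, TensorProduct.map_tmul, LinearMap.id_apply,
      LinearEquiv.coe_toLinearMap]
  -- Part 2 : Ψ ∘ σ = id
  have part2 : ∀ y : A ⊗[ℂ] V, Ψ (σ y) = y := by
    intro y
    induction y using TensorProduct.induction_on with
    | zero => simp
    | tmul a v =>
      rw [σtmul, hΨ]
      simp only [LinearMap.comp_apply, LinearEquiv.coe_toLinearMap,
        LinearEquiv.symm_apply_apply, TensorProduct.map_tmul, LinearMap.id_apply, mulσ₀]
    | add s t hs ht => simp only [map_add, hs, ht]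
  refine ⟨?_, part2 x, ?_⟩
  · -- Part 1 : σ x lies in the image of B ⊗ C
    -- abbreviations
    set S : H →ₗ[ℂ] H := (HopfAlgebra.antipode (R := ℂ) : H →ₗ[ℂ] H) with hS
    set Δ : H →ₗ[ℂ] H ⊗[ℂ] H := (Coalgebra.comul : H →ₗ[ℂ] H ⊗[ℂ] H) with hΔ
    set mulA : A ⊗[ℂ] A →ₗ[ℂ] A := LinearMap.mul' ℂ A with hmulA
    set mulAH : (A ⊗[ℂ] H) ⊗[ℂ] (A ⊗[ℂ] H) →ₗ[ℂ] A ⊗[ℂ] H :=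
      LinearMap.mul' ℂ (A ⊗[ℂ] H) with hmulAH
    set e1 : A →ₗ[ℂ] A ⊗[ℂ] H := (TensorProduct.mk ℂ A H).flip 1 with he1
    set g : A →ₗ[ℂ] A ⊗[ℂ] H := ρ' - e1 with hg
    set d : A ⊗[ℂ] V →ₗ[ℂ] A ⊗[ℂ] (H ⊗[ℂ] V) :=
      (TensorProduct.assoc ℂ A H V).toLinearMap ∘ₗ
        TensorProduct.map ρ' LinearMap.id - TensorProduct.map LinearMap.id lamV with hd
    -- ==================== first-leg coinvariance ====================
    -- the map Φ : h ⊗ (p ⊗ q) ↦ (p ⊗ S h) ⊗ q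
    set Φ : H ⊗[ℂ] (A ⊗[ℂ] A) →ₗ[ℂ] (A ⊗[ℂ] H) ⊗[ℂ] A :=
      TensorProduct.map (TensorProduct.comm ℂ H A).toLinearMap LinearMap.id ∘ₗ
        (TensorProduct.assoc ℂ H A A).symm.toLinearMap ∘ₗ
        TensorProduct.map S LinearMap.id with hΦ
    have claimA : ∀ t : A ⊗[ℂ] A,
        Φ (TensorProduct.assoc ℂ H A A (TensorProduct.map lam LinearMap.id t)) =
          TensorProduct.map ρ' LinearMap.id t := by
      intro t
      induction t using TensorProduct.induction_on with
      | zero => simp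
      | tmul p q =>
        simp only [TensorProduct.map_tmul, LinearMap.id_apply, hlam]
        have : ∀ r : A ⊗[ℂ] H,
            Φ (TensorProduct.assoc ℂ H A A
              ((TensorProduct.map Sinv LinearMap.id (TensorProduct.comm ℂ A H r)) ⊗ₜ[ℂ] q)) =
            r ⊗ₜ[ℂ] q := by
          intro r
          induction r using TensorProduct.induction_on with
          | zero => simp
          | tmul c k =>
            simp [hΦ, hS2, TensorProduct.assoc_tmul, TensorProduct.comm_tmul]
          | add s t hs ht =>
            simp only [map_add, add_tmul, LinearMap.add_apply, hs, ht]
        exact this (ρ p)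
      | add s t hs ht => simp only [map_add, hs, ht, tmul_add, add_tmul]
    -- ρ on the first leg of ℓ
    have L1 : ∀ h : H, TensorProduct.map ρ' LinearMap.id (ℓ h) =
        Φ (TensorProduct.map LinearMap.id ℓ (Δ h)) := by
      intro h
      rw [← claimA (ℓ h), hleft h, hΔ]
    have L1map : TensorProduct.map ρ' LinearMap.id ∘ₗ ℓ =
        (Φ ∘ₗ TensorProduct.map LinearMap.id ℓ) ∘ₗ Δ :=
      LinearMap.ext fun h => L1 h
    -- auxiliary maps for the Hopf-algebra computation
    set Γ : (A ⊗[ℂ] H) ⊗[ℂ] H →ₗ[ℂ] A ⊗[ℂ] H :=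
      TensorProduct.map LinearMap.id (LinearMap.mul' ℂ H ∘ₗ TensorProduct.map LinearMap.id S) ∘ₗ
        (TensorProduct.assoc ℂ A H H).toLinearMap with hΓ
    set χ : (A ⊗[ℂ] H) ⊗[ℂ] A →ₗ[ℂ] A ⊗[ℂ] H :=
      TensorProduct.map mulA LinearMap.id ∘ₗ
        (TensorProduct.assoc ℂ A A H).symm.toLinearMap ∘ₗ
        TensorProduct.map LinearMap.id (TensorProduct.comm ℂ H A).toLinearMap ∘ₗ
        (TensorProduct.assoc ℂ A H A).toLinearMap with hχ
    set star : (A ⊗[ℂ] H) ⊗[ℂ] (A ⊗[ℂ] A) →ₗ[ℂ] (A ⊗[ℂ] H) ⊗[ℂ] A :=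
      TensorProduct.map χ LinearMap.id ∘ₗ
        (TensorProduct.assoc ℂ (A ⊗[ℂ] H) A A).symm.toLinearMap with hstar
    set Ω : ((A ⊗[ℂ] H) ⊗[ℂ] H) ⊗[ℂ] H →ₗ[ℂ] (A ⊗[ℂ] H) ⊗[ℂ] A :=
      star ∘ₗ TensorProduct.map Γ ℓ with hΩ
    -- step A : ρ applied after multiplication
    have stepA : ∀ z : (A ⊗[ℂ] A) ⊗[ℂ] A,
        TensorProduct.map ρ' LinearMap.id (TensorProduct.map mulA LinearMap.id z) =
          TensorProduct.map mulAH LinearMap.id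
            (TensorProduct.map (TensorProduct.map ρ' ρ') LinearMap.id z) := by
      intro z
      induction z using TensorProduct.induction_on with
      | zero => simp
      | tmul s q =>
        induction s using TensorProduct.induction_on with
        | zero => simp
        | tmul p p' =>
          simp only [TensorProduct.map_tmul, LinearMap.id_apply, hmulA, hmulAH,
            LinearMap.mul'_apply, hρ', AlgHom.toLinearMap_apply, map_mul]
        | add s t hs ht => simp only [add_tmul, map_add, hs, ht]
      | add s t hs ht => simp only [map_add, hs, ht]
    -- step N1 : rewriting through Ω
    have stepN1 : ∀ w : (A ⊗[ℂ] H) ⊗[ℂ] H,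
        TensorProduct.map mulAH LinearMap.id
          ((TensorProduct.assoc ℂ (A ⊗[ℂ] H) (A ⊗[ℂ] H) A).symm
            (TensorProduct.map ρ' (Φ ∘ₗ TensorProduct.map LinearMap.id ℓ)
              (TensorProduct.assoc ℂ A H H w))) =
          Ω (TensorProduct.map (TensorProduct.map ρ' LinearMap.id) LinearMap.id w) := by
      intro w
      induction w using TensorProduct.induction_on with
      | zero => simp
      | tmul r h =>
        induction r using TensorProduct.induction_on with
        | zero => simp [TensorProduct.zero_tmul]
        | tmul c gg =>
          simp only [TensorProduct.assoc_tmul, TensorProduct.map_tmul, LinearMap.id_apply,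
            LinearMap.comp_apply]
          -- LHS : mulAH (assoc.symm (ρ' c ⊗ Φ (g ⊗ ℓ h))) ; RHS : Ω ((ρ' c ⊗ g) ⊗ h)
          have lhs_eq : ∀ (s : A ⊗[ℂ] H) (t : A ⊗[ℂ] A),
              TensorProduct.map mulAH LinearMap.id
                ((TensorProduct.assoc ℂ (A ⊗[ℂ] H) (A ⊗[ℂ] H) A).symm
                  (s ⊗ₜ[ℂ] Φ (gg ⊗ₜ[ℂ] t))) =
              star ((Γ (s ⊗ₜ[ℂ] gg)) ⊗ₜ[ℂ] t) := by
            intro s t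
            induction t using TensorProduct.induction_on with
            | zero => simp [tmul_zero]
            | tmul p q =>
              induction s using TensorProduct.induction_on with
              | zero => simp [TensorProduct.zero_tmul]
              | tmul c₀ c₁ =>
                simp only [hΦ, hΓ, hχ, hstar, LinearMap.comp_apply,
                  TensorProduct.map_tmul, LinearMap.id_apply,
                  LinearEquiv.coe_toLinearMap, TensorProduct.assoc_tmul,
                  TensorProduct.assoc_symm_tmul, TensorProduct.comm_tmul,
                  hmulAH, hmulA, LinearMap.mul'_apply,
                  Algebra.TensorProduct.tmul_mul_tmul]
              | add u u' hu hu' =>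
                simp only [add_tmul, map_add, hu, hu', TensorProduct.add_tmul]
            | add u u' hu hu' =>
              simp only [tmul_add, map_add, hu, hu', TensorProduct.tmul_add]
          rw [lhs_eq (ρ' c) (ℓ h)]
          simp [hΩ]
        | add s t hs ht => simp only [add_tmul, map_add, hs, ht]
      | add s t hs ht => simp only [map_add, hs, ht]
    -- coassociativity, rearranged
    have mm : ∀ b : A, TensorProduct.map ρ' LinearMap.id (ρ b) =
        (TensorProduct.assoc ℂ A H H).symm (TensorProduct.map LinearMap.id Δ (ρ b)) := by
      intro b
      rw [← hcoassoc b, LinearEquiv.symm_apply_apply]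
    -- step Q : iterated coassociativity on the first leg
    have stepQ : ∀ r : A ⊗[ℂ] H,
        TensorProduct.map (TensorProduct.map ρ' LinearMap.id) LinearMap.id
          (TensorProduct.map ρ' LinearMap.id r) =
        TensorProduct.map (TensorProduct.assoc ℂ A H H).symm.toLinearMap LinearMap.id
          (TensorProduct.map (TensorProduct.map LinearMap.id Δ) LinearMap.id
            (TensorProduct.map ρ' LinearMap.id r)) := by
      intro r
      induction r using TensorProduct.induction_on with
      | zero => simp
      | tmul b h =>
        simp only [TensorProduct.map_tmul, LinearMap.id_apply, LinearEquiv.coe_toLinearMap]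
        rw [show ρ' b = ρ b from rfl, mm b]
      | add s t hs ht => simp only [map_add, hs, ht]
    -- the Hopf-algebra identity
    have SC1 : ∀ (c : A) (u : H ⊗[ℂ] H),
        Γ ((TensorProduct.assoc ℂ A H H).symm (c ⊗ₜ[ℂ] u)) =
          c ⊗ₜ[ℂ] (LinearMap.mul' ℂ H (TensorProduct.map LinearMap.id S u)) := by
      intro c u
      induction u using TensorProduct.induction_on with
      | zero => simp [tmul_zero]
      | tmul g₁ g₂ =>
        simp [hΓ, TensorProduct.assoc_symm_tmul, TensorProduct.assoc_tmul]
      | add s t hs ht => simp only [tmul_add, map_add, hs, ht]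
    have SC2 : ∀ (c : A) (t : A ⊗[ℂ] A),
        star ((c ⊗ₜ[ℂ] (1 : H)) ⊗ₜ[ℂ] t) =
          TensorProduct.map e1 LinearMap.id
            (TensorProduct.map mulA LinearMap.id
              ((TensorProduct.assoc ℂ A A A).symm (c ⊗ₜ[ℂ] t))) := by
      intro c t
      induction t using TensorProduct.induction_on with
      | zero => simp [tmul_zero]
      | tmul p q =>
        simp [hstar, hχ, he1, TensorProduct.assoc_symm_tmul, TensorProduct.assoc_tmul,
          TensorProduct.comm_tmul]
      | add s t hs ht => simp only [tmul_add, map_add, hs, ht]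
    have hopf : ∀ h : H, LinearMap.mul' ℂ H (TensorProduct.map LinearMap.id S (Δ h)) =
        algebraMap ℂ H (Coalgebra.counit h) := by
      intro h
      have := HopfAlgebra.mul_antipode_lTensor_comul_apply (R := ℂ) h
      simpa [LinearMap.lTensor, hS, hΔ] using this
    have Kclaim : ∀ (c : A) (t : H ⊗[ℂ] H),
        Ω (TensorProduct.map (TensorProduct.assoc ℂ A H H).symm.toLinearMap LinearMap.id
            (TensorProduct.map (TensorProduct.map LinearMap.id Δ) LinearMap.id
              ((TensorProduct.assoc ℂ A H H).symm (c ⊗ₜ[ℂ] t)))) =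
          TensorProduct.map e1 LinearMap.id
            (F (c ⊗ₜ[ℂ] (TensorProduct.lid ℂ H
              (TensorProduct.map Coalgebra.counit LinearMap.id t)))) := by
      intro c t
      induction t using TensorProduct.induction_on with
      | zero => simp [tmul_zero]
      | tmul gg k =>
        simp only [TensorProduct.assoc_symm_tmul, TensorProduct.map_tmul,
          LinearMap.id_apply, LinearEquiv.coe_toLinearMap, hΩ, LinearMap.comp_apply]
        rw [SC1 c (Δ gg), hopf gg]
        have h1 : (c ⊗ₜ[ℂ] (algebraMap ℂ H (Coalgebra.counit gg))) ⊗ₜ[ℂ] (ℓ k) =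
            (Coalgebra.counit gg : ℂ) • ((c ⊗ₜ[ℂ] (1 : H)) ⊗ₜ[ℂ] (ℓ k)) := by
          rw [Algebra.algebraMap_eq_smul_one, tmul_smul, ← smul_tmul']
        rw [h1, map_smul, SC2 c (ℓ k)]
        have h2 : F (c ⊗ₜ[ℂ] k) = TensorProduct.map mulA LinearMap.id
            ((TensorProduct.assoc ℂ A A A).symm (c ⊗ₜ[ℂ] ℓ k)) := by
          simp [hF]
        rw [← h2]
        have h3 : (TensorProduct.lid ℂ H)
            ((Coalgebra.counit gg : ℂ) ⊗ₜ[ℂ] k) =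
            (Coalgebra.counit gg : ℂ) • k := TensorProduct.lid_tmul _ _
        rw [h3, tmul_smul, map_smul, map_smul]
      | add s t hs ht =>
        simp only [tmul_add, map_add, hs, ht]
    have Kρ : ∀ r : A ⊗[ℂ] H,
        Ω (TensorProduct.map (TensorProduct.assoc ℂ A H H).symm.toLinearMap LinearMap.id
            (TensorProduct.map (TensorProduct.map LinearMap.id Δ) LinearMap.id
              ((TensorProduct.assoc ℂ A H H).symm
                (TensorProduct.map LinearMap.id Δ r)))) =
          TensorProduct.map e1 LinearMap.id (F r) := by
      intro r
      induction r using TensorProduct.induction_on with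
      | zero => simp
      | tmul c h =>
        have h0 : TensorProduct.map LinearMap.id Δ (c ⊗ₜ[ℂ] h) = c ⊗ₜ[ℂ] Δ h := by
          simp
        rw [h0, Kclaim c (Δ h)]
        have h1 : (TensorProduct.lid ℂ H)
            ((TensorProduct.map Coalgebra.counit LinearMap.id) (Δ h)) = h := by
          have h2 : (TensorProduct.map Coalgebra.counit LinearMap.id) (Δ h) =
              (1 : ℂ) ⊗ₜ[ℂ] h := by
            simpa [LinearMap.rTensor, hΔ] using Coalgebra.rTensor_counit_comul (R := ℂ) h
          rw [h2]
          simp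
        rw [h1]
      | add s t hs ht => simp only [map_add, hs, ht]
    -- the full first-leg coinvariance
    have coinv1 : ∀ a : A, TensorProduct.map ρ' LinearMap.id (F (ρ' a)) =
        TensorProduct.map e1 LinearMap.id (F (ρ' a)) := by
      intro a
      rw [show ρ' a = ρ a from rfl]
      have s0 : F (ρ a) = TensorProduct.map mulA LinearMap.id
          ((TensorProduct.assoc ℂ A A A).symm
            (TensorProduct.map LinearMap.id ℓ (ρ a))) := by
        simp [hF]
      rw [s0, stepA, TensorProduct.map_map_assoc_symm ρ' ρ' LinearMap.id]
      have s1' : TensorProduct.map ρ' (TensorProduct.map ρ' LinearMap.id)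
            (TensorProduct.map LinearMap.id ℓ (ρ a)) =
          TensorProduct.map ρ' (Φ ∘ₗ TensorProduct.map LinearMap.id ℓ)
            (TensorProduct.assoc ℂ A H H (TensorProduct.map ρ' LinearMap.id (ρ a))) := by
        have e : TensorProduct.map ρ' (TensorProduct.map ρ' LinearMap.id) ∘ₗ
            TensorProduct.map LinearMap.id ℓ =
            (TensorProduct.map ρ' (Φ ∘ₗ TensorProduct.map LinearMap.id ℓ)) ∘ₗ
              TensorProduct.map LinearMap.id Δ := by
          rw [← TensorProduct.map_comp, ← TensorProduct.map_comp, L1map]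
        have e2 := congrArg (fun f => f (ρ a)) e
        simp only [LinearMap.comp_apply] at e2
        rw [e2, ← hcoassoc a]
      rw [s1', stepN1, stepQ (ρ a), mm a, Kρ (ρ a), s0]
    -- lifting first-leg coinvariance to A ⊗ V
    have msub : ∀ z : A ⊗[ℂ] A, TensorProduct.map g LinearMap.id z =
        TensorProduct.map ρ' LinearMap.id z - TensorProduct.map e1 LinearMap.id z := by
      intro z
      induction z using TensorProduct.induction_on with
      | zero => simp
      | tmul p q => simp [hg, sub_tmul, LinearMap.sub_apply]
      | add s t hs ht => simp only [map_add, hs, ht]; abel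
    have key1 : ∀ y : A ⊗[ℂ] V, TensorProduct.map g LinearMap.id (σ y) = 0 := by
      intro y
      induction y using TensorProduct.induction_on with
      | zero => simp
      | tmul a v =>
        rw [σtmul]
        have lift1 : ∀ t : A ⊗[ℂ] A,
            TensorProduct.map g LinearMap.id (TensorProduct.assoc ℂ A A V (t ⊗ₜ[ℂ] v)) =
            TensorProduct.assoc ℂ (A ⊗[ℂ] H) A V
              ((TensorProduct.map g LinearMap.id t) ⊗ₜ[ℂ] v) := by
          intro t
          induction t using TensorProduct.induction_on with
          | zero => simp
          | tmul p q => simp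
          | add s t hs ht => simp only [map_add, add_tmul, hs, ht]
        rw [lift1 (F (ρ' a)), msub (F (ρ' a)), coinv1 a, sub_self,
          TensorProduct.zero_tmul, map_zero]
      | add s t hs ht => simp only [map_add, hs, ht, add_zero]
    -- ==================== second-leg: cotensor compatibility ====================
    set d1 : A ⊗[ℂ] V →ₗ[ℂ] A ⊗[ℂ] (H ⊗[ℂ] V) :=
      (TensorProduct.assoc ℂ A H V).toLinearMap ∘ₗ
        TensorProduct.map ρ' LinearMap.id with hd1
    set d2 : A ⊗[ℂ] V →ₗ[ℂ] A ⊗[ℂ] (H ⊗[ℂ] V) :=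
      TensorProduct.map LinearMap.id lamV with hd2
    set N : A ⊗[ℂ] (H ⊗[ℂ] V) →ₗ[ℂ] A ⊗[ℂ] (A ⊗[ℂ] (H ⊗[ℂ] V)) :=
      (TensorProduct.assoc ℂ A A (H ⊗[ℂ] V)).toLinearMap ∘ₗ
        TensorProduct.map (F ∘ₗ ρ') LinearMap.id with hN
    have E2 : ∀ y : A ⊗[ℂ] V,
        TensorProduct.map LinearMap.id d2 (σ y) = N (d2 y) := by
      intro y
      induction y using TensorProduct.induction_on with
      | zero => simp
      | tmul a v =>
        rw [σtmul]
        have inner : ∀ t : A ⊗[ℂ] A,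
            TensorProduct.map LinearMap.id d2 (TensorProduct.assoc ℂ A A V (t ⊗ₜ[ℂ] v)) =
            TensorProduct.assoc ℂ A A (H ⊗[ℂ] V) (t ⊗ₜ[ℂ] (lamV v)) := by
          intro t
          induction t using TensorProduct.induction_on with
          | zero => simp
          | tmul p q => simp [hd2]
          | add s t hs ht => simp only [map_add, add_tmul, hs, ht]
        rw [inner (F (ρ' a))]
        simp [hN, hd2]
      | add s t hs ht => simp only [map_add, hs, ht]
    set G : A ⊗[ℂ] (H ⊗[ℂ] H) →ₗ[ℂ] A ⊗[ℂ] (A ⊗[ℂ] H) :=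
      (TensorProduct.assoc ℂ A A H).toLinearMap ∘ₗ
        TensorProduct.map F LinearMap.id ∘ₗ
        (TensorProduct.assoc ℂ A H H).symm.toLinearMap with hG
    have LF : ∀ r : A ⊗[ℂ] H, TensorProduct.map LinearMap.id ρ' (F r) =
        G (TensorProduct.map LinearMap.id Δ r) := by
      intro r
      induction r using TensorProduct.induction_on with
      | zero => simp
      | tmul c h =>
        have sub1 : ∀ t : A ⊗[ℂ] A, TensorProduct.map LinearMap.id ρ'
            (TensorProduct.map mulA LinearMap.id
              ((TensorProduct.assoc ℂ A A A).symm (c ⊗ₜ[ℂ] t))) =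
            TensorProduct.map (LinearMap.mulLeft ℂ c) LinearMap.id
              (TensorProduct.map LinearMap.id ρ' t) := by
          intro t
          induction t using TensorProduct.induction_on with
          | zero => simp [tmul_zero]
          | tmul p q => simp [hmulA]
          | add s t hs ht => simp only [tmul_add, map_add, hs, ht]
        have s0 : F (c ⊗ₜ[ℂ] h) = TensorProduct.map mulA LinearMap.id
            ((TensorProduct.assoc ℂ A A A).symm (c ⊗ₜ[ℂ] ℓ h)) := by simp [hF]
        rw [s0, sub1 (ℓ h), hright h]
        have sub2 : ∀ u : H ⊗[ℂ] H,
            TensorProduct.map (LinearMap.mulLeft ℂ c) LinearMap.id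
              (TensorProduct.assoc ℂ A A H (TensorProduct.map ℓ LinearMap.id u)) =
            G (c ⊗ₜ[ℂ] u) := by
          intro u
          induction u using TensorProduct.induction_on with
          | zero => simp
          | tmul h₁ h₂ =>
            simp only [TensorProduct.map_tmul, LinearMap.id_apply, hG,
              LinearMap.comp_apply, LinearEquiv.coe_toLinearMap,
              TensorProduct.assoc_symm_tmul]
            have s0' : F (c ⊗ₜ[ℂ] h₁) = TensorProduct.map mulA LinearMap.id
                ((TensorProduct.assoc ℂ A A A).symm (c ⊗ₜ[ℂ] ℓ h₁)) := by simp [hF]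
            rw [s0']
            generalize ℓ h₁ = t
            induction t using TensorProduct.induction_on with
            | zero => simp [tmul_zero]
            | tmul p q => simp [hmulA]
            | add s t hs ht => simp only [tmul_add, map_add, add_tmul, hs, ht]
          | add s t hs ht => simp only [tmul_add, map_add, hs, ht]
        rw [sub2 (Δ h)]
        simp
      | add s t hs ht => simp only [map_add, hs, ht]
    have NAT : ∀ r : A ⊗[ℂ] H,
        G (TensorProduct.assoc ℂ A H H (TensorProduct.map ρ' LinearMap.id r)) =
        TensorProduct.assoc ℂ A A H
          (TensorProduct.map (F ∘ₗ ρ') LinearMap.id r) := by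
      intro r
      induction r using TensorProduct.induction_on with
      | zero => simp
      | tmul c h =>
        simp only [TensorProduct.map_tmul, LinearMap.id_apply, LinearMap.comp_apply]
        have inner : ∀ s : A ⊗[ℂ] H,
            G (TensorProduct.assoc ℂ A H H (s ⊗ₜ[ℂ] h)) =
            TensorProduct.assoc ℂ A A H ((F s) ⊗ₜ[ℂ] h) := by
          intro s
          induction s using TensorProduct.induction_on with
          | zero => simp
          | tmul c₀ c₁ => simp [hG]
          | add s t hs ht => simp only [map_add, add_tmul, hs, ht]
        exact inner (ρ' c)
      | add s t hs ht => simp only [map_add, hs, ht]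
    have LE1 : ∀ a : A, TensorProduct.map LinearMap.id ρ' (F (ρ' a)) =
        TensorProduct.assoc ℂ A A H
          (TensorProduct.map (F ∘ₗ ρ') LinearMap.id (ρ' a)) := by
      intro a
      rw [show ρ' a = ρ a from rfl, LF (ρ a), ← hcoassoc a, NAT (ρ a)]
    have E1 : ∀ y : A ⊗[ℂ] V,
        TensorProduct.map LinearMap.id d1 (σ y) = N (d1 y) := by
      intro y
      induction y using TensorProduct.induction_on with
      | zero => simp
      | tmul a v =>
        rw [σtmul]
        have E1a : ∀ t : A ⊗[ℂ] A,
            TensorProduct.map LinearMap.id d1 (TensorProduct.assoc ℂ A A V (t ⊗ₜ[ℂ] v)) =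
            TensorProduct.map LinearMap.id (TensorProduct.map LinearMap.id
              ((TensorProduct.mk ℂ H V).flip v)) (TensorProduct.map LinearMap.id ρ' t) := by
          intro t
          induction t using TensorProduct.induction_on with
          | zero => simp
          | tmul p q =>
            simp only [TensorProduct.assoc_tmul, TensorProduct.map_tmul, LinearMap.id_apply]
            congr 1
            rw [hd1]
            simp only [LinearMap.comp_apply, LinearEquiv.coe_toLinearMap,
              TensorProduct.map_tmul, LinearMap.id_apply]
            induction (ρ' q) using TensorProduct.induction_on with
            | zero => simp
            | tmul q₀ q₁ => simp
            | add s t hs ht => simp only [map_add, add_tmul, hs, ht]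
          | add s t hs ht => simp only [map_add, add_tmul, hs, ht]
        rw [E1a (F (ρ' a)), LE1 a]
        have E1b : ∀ r : A ⊗[ℂ] H,
            TensorProduct.map LinearMap.id (TensorProduct.map LinearMap.id
              ((TensorProduct.mk ℂ H V).flip v))
              (TensorProduct.assoc ℂ A A H
                (TensorProduct.map (F ∘ₗ ρ') LinearMap.id r)) =
            N (TensorProduct.assoc ℂ A H V (r ⊗ₜ[ℂ] v)) := by
          intro r
          induction r using TensorProduct.induction_on with
          | zero => simp
          | tmul c h =>
            simp only [TensorProduct.map_tmul, LinearMap.id_apply, LinearMap.comp_apply,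
              TensorProduct.assoc_tmul, hN, LinearEquiv.coe_toLinearMap]
            generalize F (ρ' c) = t
            induction t using TensorProduct.induction_on with
            | zero => simp
            | tmul p q => simp
            | add s t hs ht => simp only [map_add, add_tmul, hs, ht]
          | add s t hs ht => simp only [map_add, add_tmul, hs, ht]
        have hd1v : d1 (a ⊗ₜ[ℂ] v) =
            TensorProduct.assoc ℂ A H V ((ρ' a) ⊗ₜ[ℂ] v) := by
          rw [hd1]
          simp only [LinearMap.comp_apply, LinearEquiv.coe_toLinearMap,
            TensorProduct.map_tmul, LinearMap.id_apply]
        rw [E1b (ρ' a), hd1v]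
      | add s t hs ht => simp only [map_add, hs, ht]
    have msub2 : ∀ z : A ⊗[ℂ] (A ⊗[ℂ] V), TensorProduct.map LinearMap.id d z =
        TensorProduct.map LinearMap.id d1 z - TensorProduct.map LinearMap.id d2 z := by
      intro z
      induction z using TensorProduct.induction_on with
      | zero => simp
      | tmul p y => simp [hd, tmul_sub, LinearMap.sub_apply]
      | add s t hs ht => simp only [map_add, hs, ht]; abel
    have hdx : d x = 0 := by
      rw [hC] at hx
      exact LinearMap.mem_ker.mp hx
    have key2 : TensorProduct.map LinearMap.id d (σ x) = 0 := by
      rw [msub2, E1 x, E2 x]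
      have hN2 : N (d1 x) - N (d2 x) = N (d1 x - d2 x) := (map_sub N _ _).symm
      have hsub : d1 x - d2 x = d x := by rw [hd]; simp [LinearMap.sub_apply]
      rw [hN2, hsub, hdx, map_zero]
    -- ==================== exactness / flatness glue ====================
    have ex1 : Function.Exact B.subtype g := by
      rw [LinearMap.exact_iff, Submodule.range_subtype]
      exact hB.symm
    have ex2 : Function.Exact C.subtype d := by
      rw [LinearMap.exact_iff, Submodule.range_subtype]
      exact hC.symm
    have ex1T := Module.Flat.rTensor_exact (R := ℂ) (M := A ⊗[ℂ] V) ex1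
    have h0 : g.rTensor (A ⊗[ℂ] V) (σ x) = 0 := key1 x
    obtain ⟨z, hz⟩ := (ex1T (σ x)).mp h0
    have hinj : Function.Injective (B.subtype.rTensor (A ⊗[ℂ] (H ⊗[ℂ] V))) :=
      Module.Flat.rTensor_preserves_injective_linearMap B.subtype B.injective_subtype
    have hz2 : d.lTensor ↥B z = 0 := by
      apply hinj
      rw [map_zero]
      have comm1 : B.subtype.rTensor (A ⊗[ℂ] (H ⊗[ℂ] V)) (d.lTensor ↥B z) =
          d.lTensor A (B.subtype.rTensor (A ⊗[ℂ] V) z) := by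
        rw [← LinearMap.comp_apply, ← LinearMap.comp_apply,
          LinearMap.rTensor_comp_lTensor, ← LinearMap.lTensor_comp_rTensor]
      rw [comm1, hz]
      exact key2
    have ex2T := Module.Flat.lTensor_exact (R := ℂ) ↥B (N := ↥C) (N' := A ⊗[ℂ] V)
      (N'' := A ⊗[ℂ] (H ⊗[ℂ] V)) ex2
    obtain ⟨w, hw⟩ := (ex2T z).mp hz2
    refine ⟨w, ?_⟩
    have hsplit2 : TensorProduct.map B.subtype C.subtype =
        B.subtype.rTensor (A ⊗[ℂ] V) ∘ₗ C.subtype.lTensor ↥B := by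
      rw [LinearMap.rTensor_comp_lTensor]
    rw [hsplit2, LinearMap.comp_apply, hw, hz]
  · -- Part 3 : B-linearity
    intro b hb
    have hbρ : ρ' b = b ⊗ₜ[ℂ] (1 : H) := by
      rw [hB] at hb
      have h2 : ρ' b - (TensorProduct.mk ℂ A H).flip 1 b = 0 := LinearMap.mem_ker.mp hb
      rw [sub_eq_zero] at h2
      simpa using h2
    have key : ∀ a : A, F (ρ' (b * a)) =
        TensorProduct.map (LinearMap.mulLeft ℂ b) LinearMap.id (F (ρ' a)) := by
      intro a
      have h1 : ρ' (b * a) = (b ⊗ₜ[ℂ] (1 : H)) * ρ' a := by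
        rw [hρ']
        simp only [AlgHom.toLinearMap_apply, map_mul]
        rw [← hbρ, hρ']
        simp only [AlgHom.toLinearMap_apply]
      rw [h1]
      induction (ρ' a) using TensorProduct.induction_on with
      | zero => simp
      | tmul c h =>
        have h2 : (b ⊗ₜ[ℂ] (1 : H)) * (c ⊗ₜ[ℂ] h) = (b * c) ⊗ₜ[ℂ] h := by
          simp [Algebra.TensorProduct.tmul_mul_tmul]
        rw [h2]
        simp only [hF, LinearMap.comp_apply, TensorProduct.map_tmul, LinearMap.id_apply,
          LinearEquiv.coe_toLinearMap]
        induction (ℓ h) using TensorProduct.induction_on with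
        | zero => rw [tmul_zero]; simp
        | tmul p q => simp [mul_assoc]
        | add s t hs ht => simp only [tmul_add, map_add, hs, ht]
      | add s t hs ht => simp only [mul_add, map_add, hs, ht]
    clear hx
    induction x using TensorProduct.induction_on with
    | zero => simp
    | tmul a v =>
      have h3 : TensorProduct.map (LinearMap.mulLeft ℂ b) LinearMap.id (a ⊗ₜ[ℂ] v)
          = (b * a) ⊗ₜ[ℂ] v := by simp
      rw [h3, σtmul, σtmul, key]
      generalize F (ρ' a) = t
      induction t using TensorProduct.induction_on with
      | zero => simp
      | tmul p q => simp
      | add s t hs ht => simp only [map_add, add_tmul, hs, ht]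
    | add s t hs ht => simp only [map_add, hs, ht]
end

section
/- Let B be an algebra, Ω¹B = ker(μ : B ⊗ B → B) the bimodule of universal one-forms, and d : B → Ω¹B, d(b) = 1⊗b − b⊗1, the universal derivative. Let M be a left B-module and σ : M → B ⊗ M a left B-linear splitting of the action map B ⊗ M → M. Then ∇ : M → B ⊗ M defined by ∇(x) = 1 ⊗ x − σ(x) takes values in Ω¹B ⊗_B M ⊆ B ⊗ M and satisfies the Leibniz rule ∇(b·x) = d(b)·x + b·∇(x) for all b ∈ B and x ∈ M, where d(b)·x denotes (1⊗bx − b⊗x) ∈ B ⊗ M. -/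
open TensorProduct

/-- Given a left `B`-linear splitting `σ : M → B ⊗ M` of the action map, the map
`∇(x) = 1 ⊗ x − σ(x)` takes values in (the canonical image in `B ⊗ M` of)
`Ω¹B ⊗_B M` (where `Ω¹B = ker μ ⊆ B ⊗ B`, with `(b ⊗ b') ⊗ m ↦ b ⊗ b'·m`) and
satisfies the Leibniz rule `∇(b·x) = d(b)·x + b·∇(x)`. -/
theorem stmt_16 (B M : Type*) [Ring B] [Algebra ℂ B]
    [AddCommGroup M] [Module ℂ M] [Module B M] [IsScalarTower ℂ B M]
    (act : B ⊗[ℂ] M →ₗ[ℂ] M)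
    (hact : ∀ (b : B) (m : M), act (b ⊗ₜ[ℂ] m) = b • m)
    (σ : M →ₗ[ℂ] B ⊗[ℂ] M)
    (hsplit : ∀ m : M, act (σ m) = m)
    (hBlin : ∀ (b : B) (m : M),
      σ (b • m) = TensorProduct.map (LinearMap.mulLeft ℂ b) LinearMap.id (σ m))
    (grad : M →ₗ[ℂ] B ⊗[ℂ] M)
    (hgrad : ∀ m : M, grad m = (1 : B) ⊗ₜ[ℂ] m - σ m) :
    (∀ m : M, grad m ∈ LinearMap.range
      ((TensorProduct.map (LinearMap.id : B →ₗ[ℂ] B) act) ∘ₗ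
        (TensorProduct.assoc ℂ B B M).toLinearMap ∘ₗ
        TensorProduct.map (LinearMap.ker (LinearMap.mul' ℂ B)).subtype
          (LinearMap.id : M →ₗ[ℂ] M))) ∧
    (∀ (b : B) (m : M),
      grad (b • m) = ((1 : B) ⊗ₜ[ℂ] (b • m) - b ⊗ₜ[ℂ] m) +
        TensorProduct.map (LinearMap.mulLeft ℂ b) LinearMap.id (grad m)) := by
  set Φ := ((TensorProduct.map (LinearMap.id : B →ₗ[ℂ] B) act) ∘ₗ
        (TensorProduct.assoc ℂ B B M).toLinearMap ∘ₗ
        TensorProduct.map (LinearMap.ker (LinearMap.mul' ℂ B)).subtype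
          (LinearMap.id : M →ₗ[ℂ] M)) with hΦ
  -- the universal derivative into ker μ
  have hker : ∀ b : B, (1 : B) ⊗ₜ[ℂ] b - b ⊗ₜ[ℂ] (1 : B) ∈
      LinearMap.ker (LinearMap.mul' ℂ B) := by
    intro b
    simp [LinearMap.mem_ker, LinearMap.mul'_apply]
  let d : B →ₗ[ℂ] LinearMap.ker (LinearMap.mul' ℂ B) :=
    { toFun := fun b => ⟨(1 : B) ⊗ₜ[ℂ] b - b ⊗ₜ[ℂ] (1 : B), hker b⟩
      map_add' := by
        intro a b
        ext
        simp [TensorProduct.tmul_add, TensorProduct.add_tmul]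
        abel
      map_smul' := by
        intro c b
        ext
        simp [smul_sub, TensorProduct.smul_tmul'] }
  let D : B ⊗[ℂ] M →ₗ[ℂ] (LinearMap.ker (LinearMap.mul' ℂ B)) ⊗[ℂ] M :=
    TensorProduct.map d LinearMap.id
  have key : ∀ t : B ⊗[ℂ] M, Φ (D t) = (1 : B) ⊗ₜ[ℂ] act t - t := by
    intro t
    induction t using TensorProduct.induction_on with
    | zero => simp
    | tmul b m =>
        simp only [D, Φ, TensorProduct.map_tmul, LinearMap.id_apply,
          LinearMap.comp_apply, d, LinearMap.coe_mk, AddHom.coe_mk,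
          Submodule.coe_subtype]
        rw [show ((⟨(1:B) ⊗ₜ[ℂ] b - b ⊗ₜ[ℂ] (1:B), hker b⟩ :
          LinearMap.ker (LinearMap.mul' ℂ B)) : B ⊗[ℂ] B) ⊗ₜ[ℂ] m =
          ((1:B) ⊗ₜ[ℂ] b) ⊗ₜ[ℂ] m - (b ⊗ₜ[ℂ] (1:B)) ⊗ₜ[ℂ] m from by
            rw [← TensorProduct.sub_tmul]]
        simp [hact, TensorProduct.assoc_tmul, one_smul]
    | add x y hx hy =>
        simp only [map_add, TensorProduct.tmul_add, hx, hy]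
        abel
  constructor
  · intro m
    exact ⟨D (σ m), by rw [key, hsplit, hgrad]⟩
  · intro b m
    rw [hgrad, hgrad, hBlin]
    simp only [TensorProduct.map_tmul, LinearMap.mulLeft_apply, LinearMap.id_apply,
      map_sub, mul_one]
    abel
end
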